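/- For every finite simple graph H equipped with a proper 3-coloring c_H and containing at most one triangle (at most one 3-clique), there exists a finite simple graph H* with the following properties: (i) H* admits a proper 3-coloring; (ii) H* has exactly the same number of triangles (3-cliques) as H; and (iii) for every finite simple graph G equipped with a proper 3-coloring c_G, if G contains no colored copy of H with respect to c_G and c_H, then G contains no copy of H* (i.e., G is H*-free). -/

import Mathlib

open SimpleGraph

namespace ColoredAux

def rEdges : List (Nat × Nat) :=
  [(0,3),(0,6),(0,7),(0,8),(1,4),(1,5),(1,8),(2,3),(2,5),(2,9),(3,4),(4,6),(4,9),(5,6),(5,7),(7,9),(8,9)]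

def radj (i j : Fin 10) : Bool := decide ((i.val, j.val) ∈ rEdges) || decide ((j.val, i.val) ∈ rEdges)

def RG : SimpleGraph (Fin 10) where
  Adj i j := radj i j = true
  symm := ⟨by intro i j h; revert h; revert i j; decide⟩
  loopless := ⟨by intro i; revert i; decide⟩

instance : DecidableRel RG.Adj := fun i j => inferInstanceAs (Decidable (radj i j = true))

lemma RG_tf : ∀ i j k : Fin 10, RG.Adj i j → RG.Adj j k → RG.Adj i k → False := by decide

def cw : Fin 10 → Fin 3 := ![0,1,2,1,0,0,1,2,2,1]

lemma RG_col : ∀ i j, RG.Adj i j → cw i ≠ cw j := by decide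

def refv (j : Fin 3) : Fin 10 := ⟨j.val, by omega⟩

lemma cw_refv : ∀ j, cw (refv j) = j := by decide

set_option maxRecDepth 40000 in
set_option synthInstance.maxSize 4000 in
set_option synthInstance.maxHeartbeats 2000000 in
set_option maxHeartbeats 2000000 in
lemma RG_force' : ∀ c0 c1 c2 c3 c4 c5 c6 c7 c8 c9 : Fin 3,
    (c0≠c3 ∧ c0≠c6 ∧ c0≠c7 ∧ c0≠c8 ∧ c1≠c4 ∧ c1≠c5 ∧ c1≠c8 ∧ c2≠c3 ∧ c2≠c5 ∧ c2≠c9 ∧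
    c3≠c4 ∧ c4≠c6 ∧ c4≠c9 ∧ c5≠c6 ∧ c5≠c7 ∧ c7≠c9 ∧ c8≠c9) →
    c0≠c1 ∧ c0≠c2 ∧ c1≠c2 := by decide

lemma RG_force (c : Fin 10 → Fin 3) (h : ∀ i j, RG.Adj i j → c i ≠ c j) :
    c (refv 0) ≠ c (refv 1) ∧ c (refv 0) ≠ c (refv 2) ∧ c (refv 1) ≠ c (refv 2) :=
  RG_force' (c 0) (c 1) (c 2) (c 3) (c 4) (c 5) (c 6) (c 7) (c 8) (c 9)
    ⟨h _ _ (by decide), h _ _ (by decide), h _ _ (by decide), h _ _ (by decide),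
     h _ _ (by decide), h _ _ (by decide), h _ _ (by decide), h _ _ (by decide),
     h _ _ (by decide), h _ _ (by decide), h _ _ (by decide), h _ _ (by decide),
     h _ _ (by decide), h _ _ (by decide), h _ _ (by decide), h _ _ (by decide),
     h _ _ (by decide)⟩

lemma fin3_pairwise_ne : ∀ (s : Fin 3 → Fin 3),
    (s 0 ≠ s 1 ∧ s 0 ≠ s 2 ∧ s 1 ≠ s 2) → ∀ a b, a ≠ b → s a ≠ s b := by decide

lemma fin3_resolve : ∀ (s : Fin 3 → Fin 3) (x j : Fin 3),
    (s 0 ≠ s 1 ∧ s 0 ≠ s 2 ∧ s 1 ≠ s 2) → (∀ j', j' ≠ j → x ≠ s j') → x = s j := by decide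

lemma fin3_inj : ∀ (s : Fin 3 → Fin 3),
    (s 0 ≠ s 1 ∧ s 0 ≠ s 2 ∧ s 1 ≠ s 2) → Function.Injective s := by decide

abbrev P3 := Fin 3 ≃ Fin 3

abbrev Wt (V : Type) : Type :=
  Fin 3 ⊕ ((V × P3) ⊕ ((Fin 10) ⊕ (Fin 3 × ((V × P3) ⊕ Fin 3))))

section Main

variable {V : Type}

abbrev root (i : Fin 3) : Wt V := Sum.inl i
abbrev cp (p : V × P3) : Wt V := Sum.inr (Sum.inl p)
abbrev rv (z : Fin 10) : Wt V := Sum.inr (Sum.inr (Sum.inl z))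
abbrev tw (t : Fin 3 × ((V × P3) ⊕ Fin 3)) : Wt V := Sum.inr (Sum.inr (Sum.inr t))

variable (H : SimpleGraph V) (ch : V → Fin 3) (Tb : Finset V)

def spec : Wt V → Wt V → Prop
  | Sum.inl _, Sum.inl _ => Tb.Nonempty
  | Sum.inr (Sum.inl (v,e)), Sum.inr (Sum.inl (u,g)) => e = g ∧ H.Adj v u ∧ v ∉ Tb ∧ u ∉ Tb
  | Sum.inr (Sum.inl (v,e)), Sum.inl i => v ∉ Tb ∧ ∃ t ∈ Tb, H.Adj v t ∧ e (ch t) = i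
  | Sum.inr (Sum.inr (Sum.inl z)), Sum.inr (Sum.inr (Sum.inl z')) => RG.Adj z z'
  | Sum.inr (Sum.inr (Sum.inr (j,_))), Sum.inr (Sum.inr (Sum.inl z)) => RG.Adj (refv j) z
  | Sum.inr (Sum.inl (v,e)), Sum.inr (Sum.inr (Sum.inr (j,o))) => o = Sum.inl (v,e) ∧ j ≠ e (ch v)
  | Sum.inl i, Sum.inr (Sum.inr (Sum.inr (j,o))) => o = Sum.inr i ∧ j ≠ i
  | _, _ => False

def Hst : SimpleGraph (Wt V) := SimpleGraph.fromRel (spec H ch Tb)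

lemma hst_adj {a b : Wt V} :
    (Hst H ch Tb).Adj a b ↔ a ≠ b ∧ (spec H ch Tb a b ∨ spec H ch Tb b a) :=
  SimpleGraph.fromRel_adj _ a b

def cstar : Wt V → Fin 3
  | Sum.inl i => i
  | Sum.inr (Sum.inl (v,e)) => e (ch v)
  | Sum.inr (Sum.inr (Sum.inl z)) => cw z
  | Sum.inr (Sum.inr (Sum.inr (j,_))) => j

variable {H ch Tb}

lemma cstar_proper (hch : ∀ u v, H.Adj u v → ch u ≠ ch v) :
    ∀ a b : Wt V, (Hst H ch Tb).Adj a b → cstar ch a ≠ cstar ch b := by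
  have key : ∀ a b : Wt V, a ≠ b → spec H ch Tb a b → cstar ch a ≠ cstar ch b := by
    rintro (i | ⟨v,e⟩ | z | ⟨j,o⟩) (i' | ⟨v',e'⟩ | z' | ⟨j',o'⟩) hne hs <;>
      simp only [spec, cstar] at *
    · exact fun h => hne (by simp [root, h])
    · exact fun h => hs.2 h.symm
    · obtain ⟨t, ht, hadj, rfl⟩ := hs.2
      exact fun h => hch v t hadj (e.injective h)
    · obtain ⟨rfl, hadj, -, -⟩ := hs
      exact fun h => hch v v' hadj (e.injective h)
    · exact fun h => hs.2 h.symm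
    · exact RG_col z z' hs
    · have hcol := RG_col (refv j) z' hs
      rw [cw_refv] at hcol; exact hcol
  intro a b hab
  rw [hst_adj] at hab
  obtain ⟨hne, h | h⟩ := hab
  · exact key a b hne h
  · exact (key b a hne.symm h).symm


section Force

variable {H : SimpleGraph V} {ch : V → Fin 3} {Tb : Finset V}

lemma adj_of_spec {a b : Wt V} (hne : a ≠ b) (h : spec H ch Tb a b) : (Hst H ch Tb).Adj a b :=
  (hst_adj H ch Tb).mpr ⟨hne, Or.inl h⟩

variable {c : Wt V → Fin 3} (hc : ∀ a b : Wt V, (Hst H ch Tb).Adj a b → c a ≠ c b)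

/-- colors of the three reference vertices -/
noncomputable def sig (c : Wt V → Fin 3) : Fin 3 → Fin 3 := fun i => c (rv (refv i))

include hc

lemma sig_pairwise : sig (V := V) c 0 ≠ sig c 1 ∧ sig (V := V) c 0 ≠ sig c 2 ∧
    sig (V := V) c 1 ≠ sig c 2 := by
  have h := RG_force (fun z => c (rv z)) (fun i j hij => by
    refine hc _ _ (adj_of_spec ?_ ?_)
    · simp only [rv, ne_eq, Sum.inr.injEq, Sum.inl.injEq]
      exact hij.ne
    · exact hij)
  exact h

lemma twin_color (j : Fin 3) (o : (V × P3) ⊕ Fin 3) : c (tw (j, o)) = sig c j := by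
  classical
  set x := c (tw (j, o)) with hx
  have hprop : ∀ z z', RG.Adj z z' →
      (fun z => if z = refv j then x else c (rv z)) z ≠
      (fun z => if z = refv j then x else c (rv z)) z' := by
    intro z z' hzz
    by_cases hz : z = refv j
    · subst hz
      have hz' : ¬ z' = refv j := fun h => RG.loopless.irrefl _ (h ▸ hzz)
      simp only [if_pos rfl, if_neg hz']
      refine hc _ _ (adj_of_spec ?_ hzz)
      simp [tw, rv]
    · by_cases hz' : z' = refv j
      · subst hz'
        simp only [if_pos rfl, if_neg hz]
        refine fun hcontr => (hc (tw (j,o)) (rv z) (adj_of_spec ?_ ?_)) hcontr.symm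
        · simp [tw, rv]
        · exact hzz.symm
      · simp only [if_neg hz, if_neg hz']
        refine hc _ _ (adj_of_spec ?_ hzz)
        simp only [rv, ne_eq, Sum.inr.injEq, Sum.inl.injEq]
        exact hzz.ne
  have hF := RG_force _ hprop
  have hres : ∀ j', j' ≠ j → x ≠ sig c j' := by
    intro j' hj'
    have hrne : refv j' ≠ refv j := fun h => hj' (by
      have := congrArg Fin.val h
      simp only [refv] at this
      exact Fin.ext this)
    -- use pairwise distinctness of the modified coloring at refv j and refv j'
    have hpair := fin3_pairwise_ne (fun i => if refv i = refv j then x else c (rv (refv i)))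
      (by
        have h0 : ∀ i : Fin 3, (fun z => if z = refv j then x else c (rv z)) (refv i)
            = (fun i : Fin 3 => if refv i = refv j then x else c (rv (refv i))) i := fun i => rfl
        exact ⟨by simpa using hF.1, by simpa using hF.2.1, by simpa using hF.2.2⟩) j j' (fun h => hj' h.symm)
    simp only [if_pos rfl, if_neg hrne] at hpair
    exact hpair
  exact fin3_resolve _ _ _ (sig_pairwise hc) hres

lemma root_color (i : Fin 3) : c (root i) = sig c i := by
  refine fin3_resolve _ _ _ (sig_pairwise hc) (fun j hj => ?_)
  have hadj : (Hst H ch Tb).Adj (root i) (tw (j, Sum.inr i)) := by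
    refine adj_of_spec (by simp [root, tw]) ?_
    exact ⟨rfl, hj⟩
  have := hc _ _ hadj
  rwa [twin_color hc] at this

lemma cp_color (v : V) (e : P3) : c (cp (v, e)) = sig c (e (ch v)) := by
  refine fin3_resolve _ _ _ (sig_pairwise hc) (fun j hj => ?_)
  have hadj : (Hst H ch Tb).Adj (cp (v, e)) (tw (j, Sum.inl (v, e))) := by
    refine adj_of_spec (by simp [cp, tw]) ?_
    exact ⟨rfl, hj⟩
  have := hc _ _ hadj
  rwa [twin_color hc] at this

end Force


section Classify

variable {H : SimpleGraph V} {ch : V → Fin 3} {Tb : Finset V}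

lemma adj_rv {z : Fin 10} {w : Wt V} (h : (Hst H ch Tb).Adj (rv z) w) :
    (∃ z', w = rv z' ∧ RG.Adj z z') ∨ (∃ j o, w = tw (j,o) ∧ RG.Adj (refv j) z) := by
  obtain ⟨hne, hs | hs⟩ := (hst_adj H ch Tb).mp h <;>
    rcases w with i | ⟨v,e⟩ | z' | ⟨j,o⟩ <;> simp only [spec] at hs
  · exact Or.inl ⟨z', rfl, hs⟩
  · exact Or.inl ⟨z', rfl, hs.symm⟩
  · exact Or.inr ⟨j, o, rfl, hs⟩

lemma adj_tw {j : Fin 3} {o : (V × P3) ⊕ Fin 3} {w : Wt V}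
    (h : (Hst H ch Tb).Adj (tw (j,o)) w) :
    (∃ z, w = rv z ∧ RG.Adj (refv j) z) ∨
    (∃ v e, w = cp (v,e) ∧ o = Sum.inl (v,e) ∧ j ≠ e (ch v)) ∨
    (∃ i, w = root i ∧ o = Sum.inr i ∧ j ≠ i) := by
  obtain ⟨hne, hs | hs⟩ := (hst_adj H ch Tb).mp h <;>
    rcases w with i | ⟨v,e⟩ | z' | ⟨j',o'⟩ <;> simp only [spec] at hs
  · exact Or.inl ⟨z', rfl, hs⟩
  · exact Or.inr (Or.inr ⟨i, rfl, hs.1, hs.2⟩)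
  · exact Or.inr (Or.inl ⟨v, e, rfl, hs.1, hs.2⟩)

lemma adj_cp {v : V} {e : P3} {w : Wt V} (h : (Hst H ch Tb).Adj (cp (v,e)) w) :
    (∃ u, w = cp (u,e) ∧ H.Adj v u ∧ v ∉ Tb ∧ u ∉ Tb) ∨
    (∃ i, w = root i ∧ v ∉ Tb ∧ ∃ t ∈ Tb, H.Adj v t ∧ e (ch t) = i) ∨
    (∃ j, w = tw (j, Sum.inl (v,e)) ∧ j ≠ e (ch v)) := by
  obtain ⟨hne, hs | hs⟩ := (hst_adj H ch Tb).mp h <;>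
    rcases w with i | ⟨u,g⟩ | z' | ⟨j,o⟩ <;> simp only [spec] at hs
  · exact Or.inr (Or.inl ⟨i, rfl, hs.1, hs.2⟩)
  · obtain ⟨rfl, hadj, hv, hu⟩ := hs
    exact Or.inl ⟨u, rfl, hadj, hv, hu⟩
  · obtain ⟨rfl, hj⟩ := hs
    exact Or.inr (Or.inr ⟨j, rfl, hj⟩)
  · obtain ⟨rfl, hadj, hu, hv⟩ := hs
    exact Or.inl ⟨u, rfl, hadj.symm, hv, hu⟩

lemma adj_root {i : Fin 3} {w : Wt V} (h : (Hst H ch Tb).Adj (root i) w) :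
    (∃ j, w = root j ∧ i ≠ j ∧ Tb.Nonempty) ∨
    (∃ v e, w = cp (v,e) ∧ v ∉ Tb ∧ ∃ t ∈ Tb, H.Adj v t ∧ e (ch t) = i) ∨
    (∃ j, w = tw (j, Sum.inr i) ∧ j ≠ i) := by
  obtain ⟨hne, hs | hs⟩ := (hst_adj H ch Tb).mp h <;>
    rcases w with i' | ⟨v,e⟩ | z' | ⟨j,o⟩ <;> simp only [spec] at hs
  · exact Or.inl ⟨i', rfl, fun hii => hne (by simp [root, hii]), hs⟩
  · obtain ⟨rfl, hj⟩ := hs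
    exact Or.inr (Or.inr ⟨j, rfl, hj⟩)
  · exact Or.inl ⟨i', rfl, fun hii => hne (by simp [root, hii]), hs⟩
  · exact Or.inr (Or.inl ⟨v, e, rfl, hs.1, hs.2⟩)

end Classify


section Pairs

variable {H : SimpleGraph V} {ch : V → Fin 3} {Tb : Finset V}

lemma adj_root_root {i j : Fin 3} (h : (Hst H ch Tb).Adj (root i) (root j)) :
    i ≠ j ∧ Tb.Nonempty := by
  obtain ⟨hne, hs | hs⟩ := (hst_adj H ch Tb).mp h <;> simp only [spec] at hs <;>
    exact ⟨fun hij => hne (by rw [hij]), hs⟩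

lemma adj_root_cp {i : Fin 3} {v : V} {e : P3} (h : (Hst H ch Tb).Adj (root i) (cp (v,e))) :
    v ∉ Tb ∧ ∃ t ∈ Tb, H.Adj v t ∧ e (ch t) = i := by
  obtain ⟨hne, hs | hs⟩ := (hst_adj H ch Tb).mp h <;> simp only [spec] at hs
  exact hs

lemma adj_root_rv {i : Fin 3} {z : Fin 10} (h : (Hst H ch Tb).Adj (root i) (rv z)) : False := by
  obtain ⟨hne, hs | hs⟩ := (hst_adj H ch Tb).mp h <;> simp only [spec] at hs

lemma adj_root_tw {i j : Fin 3} {o : (V × P3) ⊕ Fin 3}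
    (h : (Hst H ch Tb).Adj (root i) (tw (j,o))) : o = Sum.inr i ∧ j ≠ i := by
  obtain ⟨hne, hs | hs⟩ := (hst_adj H ch Tb).mp h <;> simp only [spec] at hs
  exact hs

lemma adj_cp_cp {v u : V} {e g : P3} (h : (Hst H ch Tb).Adj (cp (v,e)) (cp (u,g))) :
    e = g ∧ H.Adj v u ∧ v ∉ Tb ∧ u ∉ Tb := by
  obtain ⟨hne, hs | hs⟩ := (hst_adj H ch Tb).mp h <;> simp only [spec] at hs
  · exact hs
  · exact ⟨hs.1.symm, hs.2.1.symm, hs.2.2.2, hs.2.2.1⟩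

lemma adj_cp_rv {v : V} {e : P3} {z : Fin 10} (h : (Hst H ch Tb).Adj (cp (v,e)) (rv z)) :
    False := by
  obtain ⟨hne, hs | hs⟩ := (hst_adj H ch Tb).mp h <;> simp only [spec] at hs

lemma adj_cp_tw {v : V} {e : P3} {j : Fin 3} {o : (V × P3) ⊕ Fin 3}
    (h : (Hst H ch Tb).Adj (cp (v,e)) (tw (j,o))) : o = Sum.inl (v,e) ∧ j ≠ e (ch v) := by
  obtain ⟨hne, hs | hs⟩ := (hst_adj H ch Tb).mp h <;> simp only [spec] at hs
  exact hs

lemma adj_rv_rv {z z' : Fin 10} (h : (Hst H ch Tb).Adj (rv z) (rv z')) : RG.Adj z z' := by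
  obtain ⟨hne, hs | hs⟩ := (hst_adj H ch Tb).mp h <;> simp only [spec] at hs
  · exact hs
  · exact hs.symm

lemma adj_rv_tw {z : Fin 10} {j : Fin 3} {o : (V × P3) ⊕ Fin 3}
    (h : (Hst H ch Tb).Adj (rv z) (tw (j,o))) : RG.Adj (refv j) z := by
  obtain ⟨hne, hs | hs⟩ := (hst_adj H ch Tb).mp h <;> simp only [spec] at hs
  exact hs

lemma adj_tw_tw {j j' : Fin 3} {o o' : (V × P3) ⊕ Fin 3}
    (h : (Hst H ch Tb).Adj (tw (j,o)) (tw (j',o'))) : False := by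
  obtain ⟨hne, hs | hs⟩ := (hst_adj H ch Tb).mp h <;> simp only [spec] at hs

end Pairs


section Tri

variable {H : SimpleGraph V} {ch : V → Fin 3} {Tb : Finset V}

lemma no_tri [DecidableEq V] (hH3 : ∀ T, H.IsNClique 3 T → T = Tb) (a b c : V)
    (hab : H.Adj a b) (hac : H.Adj a c) (hbc : H.Adj b c) (ha : a ∉ Tb) : False := by
  have hcl : H.IsNClique 3 {a,b,c} := is3Clique_triple_iff.mpr ⟨hab, hac, hbc⟩
  exact ha (hH3 _ hcl ▸ Finset.mem_insert_self a {b,c})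

lemma Tb_adj (hTb2 : Tb.Nonempty → H.IsNClique 3 Tb) {t1 t2 : V}
    (h1 : t1 ∈ Tb) (h2 : t2 ∈ Tb) (hne : t1 ≠ t2) : H.Adj t1 t2 :=
  (hTb2 ⟨t1, h1⟩).1 (Finset.mem_coe.mpr h1) (Finset.mem_coe.mpr h2) hne

lemma Tb_chinj (hch : ∀ u v, H.Adj u v → ch u ≠ ch v)
    (hTb2 : Tb.Nonempty → H.IsNClique 3 Tb) {t1 t2 : V}
    (h1 : t1 ∈ Tb) (h2 : t2 ∈ Tb) (h : ch t1 = ch t2) : t1 = t2 := by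
  by_contra hne
  exact hch _ _ (Tb_adj hTb2 h1 h2 hne) h

lemma tri_classify [DecidableEq V] {H : SimpleGraph V} {ch : V → Fin 3} {Tb : Finset V}
    (hch : ∀ u v, H.Adj u v → ch u ≠ ch v)
    (hH3 : ∀ T, H.IsNClique 3 T → T = Tb)
    (hTb2 : Tb.Nonempty → H.IsNClique 3 Tb)
    {x y z : Wt V} (hxy : (Hst H ch Tb).Adj x y) (hyz : (Hst H ch Tb).Adj y z)
    (hxz : (Hst H ch Tb).Adj x z) :
    Tb.Nonempty ∧ ∃ i j k : Fin 3, x = root i ∧ y = root j ∧ z = root k := by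
  rcases x with i | ⟨v,e⟩ | zz | ⟨j,o⟩
  · rcases y with i1 | ⟨v1,e1⟩ | z1 | ⟨j1,o1⟩
    · rcases z with i2 | ⟨v2,e2⟩ | z2 | ⟨j2,o2⟩
      · exact ⟨(adj_root_root hxy).2, i, i1, i2, rfl, rfl, rfl⟩
      · obtain ⟨hnem, -⟩ := adj_root_root hxy
        obtain ⟨hvn, t1, ht1, ha1, he1⟩ := adj_root_cp hxz
        obtain ⟨-, t2, ht2, ha2, he2⟩ := adj_root_cp hyz
        have htne : t1 ≠ t2 := fun hh => hnem (by rw [← he1, ← he2, hh])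
        exact (no_tri hH3 v2 t1 t2 ha1 ha2 (Tb_adj hTb2 ht1 ht2 htne) hvn).elim
      · exact (adj_root_rv hyz).elim
      · have h1 := (adj_root_tw hxz).1
        have h2 := (adj_root_tw hyz).1
        have h3 := (adj_root_root hxy).1
        rw [h1] at h2
        exact (h3 (by simpa using h2)).elim
    · rcases z with i2 | ⟨v2,e2⟩ | z2 | ⟨j2,o2⟩
      · obtain ⟨hnem, -⟩ := adj_root_root hxz
        obtain ⟨hvn, t1, ht1, ha1, he1⟩ := adj_root_cp hxy
        obtain ⟨-, t2, ht2, ha2, he2⟩ := adj_root_cp hyz.symm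
        have htne : t1 ≠ t2 := fun hh => hnem (by rw [← he1, ← he2, hh])
        exact (no_tri hH3 v1 t1 t2 ha1 ha2 (Tb_adj hTb2 ht1 ht2 htne) hvn).elim
      · obtain ⟨heg, hadj, hv1, hv2⟩ := adj_cp_cp hyz
        obtain ⟨-, t1, ht1, ha1, he1⟩ := adj_root_cp hxy
        obtain ⟨-, t2, ht2, ha2, he2⟩ := adj_root_cp hxz
        rw [← heg] at he2
        obtain rfl := Tb_chinj hch hTb2 ht1 ht2 (e1.injective (he1.trans he2.symm))
        exact (no_tri hH3 v1 v2 t1 hadj ha1 ha2 hv1).elim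
      · exact (adj_cp_rv hyz).elim
      · have h1 := (adj_root_tw hxz).1
        have h2 := (adj_cp_tw hyz).1
        rw [h1] at h2
        exact absurd h2 (by simp)
    · rcases z with i2 | ⟨v2,e2⟩ | z2 | ⟨j2,o2⟩
      · exact (adj_root_rv hxy).elim
      · exact (adj_root_rv hxy).elim
      · exact (adj_root_rv hxy).elim
      · exact (adj_root_rv hxy).elim
    · rcases z with i2 | ⟨v2,e2⟩ | z2 | ⟨j2,o2⟩
      · have h1 := (adj_root_tw hxy).1
        have h2 := (adj_root_tw hyz.symm).1
        have h3 := (adj_root_root hxz).1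
        rw [h1] at h2
        exact (h3 (by simpa using h2)).elim
      · have h1 := (adj_root_tw hxy).1
        have h2 := (adj_cp_tw hyz.symm).1
        rw [h1] at h2
        exact absurd h2 (by simp)
      · exact (adj_root_rv hxz).elim
      · exact (adj_tw_tw hyz).elim
  · rcases y with i1 | ⟨v1,e1⟩ | z1 | ⟨j1,o1⟩
    · rcases z with i2 | ⟨v2,e2⟩ | z2 | ⟨j2,o2⟩
      · obtain ⟨hnem, -⟩ := adj_root_root hyz
        obtain ⟨hvn, t1, ht1, ha1, he1⟩ := adj_root_cp hxy.symm
        obtain ⟨-, t2, ht2, ha2, he2⟩ := adj_root_cp hxz.symm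
        have htne : t1 ≠ t2 := fun hh => hnem (by rw [← he1, ← he2, hh])
        exact (no_tri hH3 v t1 t2 ha1 ha2 (Tb_adj hTb2 ht1 ht2 htne) hvn).elim
      · obtain ⟨heg, hadj, hv1, hv2⟩ := adj_cp_cp hxz
        obtain ⟨-, t1, ht1, ha1, he1⟩ := adj_root_cp hxy.symm
        obtain ⟨-, t2, ht2, ha2, he2⟩ := adj_root_cp hyz
        rw [← heg] at he2
        obtain rfl := Tb_chinj hch hTb2 ht1 ht2 (e.injective (he1.trans he2.symm))
        exact (no_tri hH3 v v2 t1 hadj ha1 ha2 hv1).elim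
      · exact (adj_root_rv hyz).elim
      · have h1 := (adj_root_tw hyz).1
        have h2 := (adj_cp_tw hxz).1
        rw [h1] at h2
        exact absurd h2 (by simp)
    · rcases z with i2 | ⟨v2,e2⟩ | z2 | ⟨j2,o2⟩
      · obtain ⟨heg, hadj, hv1, hv2⟩ := adj_cp_cp hxy
        obtain ⟨-, t1, ht1, ha1, he1⟩ := adj_root_cp hxz.symm
        obtain ⟨-, t2, ht2, ha2, he2⟩ := adj_root_cp hyz.symm
        rw [← heg] at he2
        obtain rfl := Tb_chinj hch hTb2 ht1 ht2 (e.injective (he1.trans he2.symm))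
        exact (no_tri hH3 v v1 t1 hadj ha1 ha2 hv1).elim
      · obtain ⟨-, h01, hv, -⟩ := adj_cp_cp hxy
        obtain ⟨-, h12, -, -⟩ := adj_cp_cp hyz
        obtain ⟨-, h02, -, -⟩ := adj_cp_cp hxz
        exact (no_tri hH3 v v1 v2 h01 h02 h12 hv).elim
      · exact (adj_cp_rv hyz).elim
      · have h1 := (adj_cp_tw hxz).1
        have h2 := (adj_cp_tw hyz).1
        rw [h1] at h2
        simp only [Sum.inl.injEq, Prod.mk.injEq] at h2
        exact (hxy.ne (by rw [h2.1, h2.2])).elim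
    · rcases z with i2 | ⟨v2,e2⟩ | z2 | ⟨j2,o2⟩
      · exact (adj_cp_rv hxy).elim
      · exact (adj_cp_rv hxy).elim
      · exact (adj_cp_rv hxy).elim
      · exact (adj_cp_rv hxy).elim
    · rcases z with i2 | ⟨v2,e2⟩ | z2 | ⟨j2,o2⟩
      · have h1 := (adj_root_tw hyz.symm).1
        have h2 := (adj_cp_tw hxy).1
        rw [h1] at h2
        exact absurd h2 (by simp)
      · have h1 := (adj_cp_tw hxy).1
        have h2 := (adj_cp_tw hyz.symm).1
        rw [h1] at h2
        simp only [Sum.inl.injEq, Prod.mk.injEq] at h2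
        exact (hxz.ne (by rw [h2.1, h2.2])).elim
      · exact (adj_cp_rv hxz).elim
      · exact (adj_tw_tw hyz).elim
  · rcases y with i1 | ⟨v1,e1⟩ | z1 | ⟨j1,o1⟩
    · rcases z with i2 | ⟨v2,e2⟩ | z2 | ⟨j2,o2⟩
      · exact (adj_root_rv hxy.symm).elim
      · exact (adj_root_rv hxy.symm).elim
      · exact (adj_root_rv hxy.symm).elim
      · exact (adj_root_rv hxy.symm).elim
    · rcases z with i2 | ⟨v2,e2⟩ | z2 | ⟨j2,o2⟩
      · exact (adj_cp_rv hxy.symm).elim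
      · exact (adj_cp_rv hxy.symm).elim
      · exact (adj_cp_rv hxy.symm).elim
      · exact (adj_cp_rv hxy.symm).elim
    · rcases z with i2 | ⟨v2,e2⟩ | z2 | ⟨j2,o2⟩
      · exact (adj_root_rv hyz.symm).elim
      · exact (adj_cp_rv hyz.symm).elim
      · exact (RG_tf _ _ _ (adj_rv_rv hxy) (adj_rv_rv hyz) (adj_rv_rv hxz)).elim
      · exact (RG_tf (refv j2) zz z1 (adj_rv_tw hxz) (adj_rv_rv hxy) (adj_rv_tw hyz)).elim
    · rcases z with i2 | ⟨v2,e2⟩ | z2 | ⟨j2,o2⟩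
      · exact (adj_root_rv hxz.symm).elim
      · exact (adj_cp_rv hxz.symm).elim
      · exact (RG_tf (refv j1) zz z2 (adj_rv_tw hxy) (adj_rv_rv hxz) (adj_rv_tw hyz.symm)).elim
      · exact (adj_tw_tw hyz).elim
  · rcases y with i1 | ⟨v1,e1⟩ | z1 | ⟨j1,o1⟩
    · rcases z with i2 | ⟨v2,e2⟩ | z2 | ⟨j2,o2⟩
      · have h1 := (adj_root_tw hxy.symm).1
        have h2 := (adj_root_tw hxz.symm).1
        have h3 := (adj_root_root hyz).1
        rw [h1] at h2
        exact (h3 (by simpa using h2)).elim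
      · have h1 := (adj_root_tw hxy.symm).1
        have h2 := (adj_cp_tw hxz.symm).1
        rw [h1] at h2
        exact absurd h2 (by simp)
      · exact (adj_root_rv hyz).elim
      · exact (adj_tw_tw hxz).elim
    · rcases z with i2 | ⟨v2,e2⟩ | z2 | ⟨j2,o2⟩
      · have h1 := (adj_root_tw hxz.symm).1
        have h2 := (adj_cp_tw hxy.symm).1
        rw [h1] at h2
        exact absurd h2 (by simp)
      · have h1 := (adj_cp_tw hxy.symm).1
        have h2 := (adj_cp_tw hxz.symm).1
        rw [h1] at h2
        simp only [Sum.inl.injEq, Prod.mk.injEq] at h2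
        exact (hyz.ne (by rw [h2.1, h2.2])).elim
      · exact (adj_cp_rv hyz).elim
      · exact (adj_tw_tw hxz).elim
    · rcases z with i2 | ⟨v2,e2⟩ | z2 | ⟨j2,o2⟩
      · exact (adj_root_rv hyz.symm).elim
      · exact (adj_cp_rv hyz.symm).elim
      · exact (RG_tf (refv j) z1 z2 (adj_rv_tw hxy.symm) (adj_rv_rv hyz) (adj_rv_tw hxz.symm)).elim
      · exact (adj_tw_tw hxz).elim
    · rcases z with i2 | ⟨v2,e2⟩ | z2 | ⟨j2,o2⟩
      · exact (adj_tw_tw hxy).elim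
      · exact (adj_tw_tw hxy).elim
      · exact (adj_tw_tw hxy).elim
      · exact (adj_tw_tw hxy).elim

end Tri


section Embed

variable {H : SimpleGraph V} {ch : V → Fin 3} {Tb : Finset V}

lemma fin3_cases : ∀ m : Fin 3, m = 0 ∨ m = 1 ∨ m = 2 := by decide

lemma fin3_univ3 : ∀ i j k m : Fin 3, i ≠ j → i ≠ k → j ≠ k → m = i ∨ m = j ∨ m = k := by decide

lemma exists_colored_copy (hch : ∀ u v, H.Adj u v → ch u ≠ ch v)
    (hTb2 : Tb.Nonempty → H.IsNClique 3 Tb)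
    {c : Wt V → Fin 3} (hc : ∀ a b : Wt V, (Hst H ch Tb).Adj a b → c a ≠ c b) :
    ∃ φ : V → Wt V, Function.Injective φ ∧
      (∀ u v, H.Adj u v → (Hst H ch Tb).Adj (φ u) (φ v)) ∧ ∀ v, c (φ v) = ch v := by
  classical
  have hsp := sig_pairwise hc
  have hinj : Function.Injective (sig c) := fin3_inj _ hsp
  have hbij : Function.Bijective (sig c) :=
    (Fintype.bijective_iff_injective_and_card _).mpr ⟨hinj, rfl⟩
  let E : Fin 3 ≃ Fin 3 := Equiv.ofBijective _ hbij
  let τ : P3 := E.symm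
  have hστ : ∀ i, sig c (τ i) = i := fun i => E.apply_symm_apply i
  refine ⟨fun v => if v ∈ Tb then root (τ (ch v)) else cp (v, τ), ?_, ?_, ?_⟩
  · intro u v huv
    by_cases hu : u ∈ Tb <;> by_cases hv : v ∈ Tb <;>
      simp only [hu, hv, ite_true, ite_false, if_pos, if_neg, not_false_iff] at huv
    · have hcc : ch u = ch v := τ.injective (by simpa [root] using huv)
      by_contra hne
      exact hch u v (Tb_adj hTb2 hu hv hne) hcc
    · exact absurd huv (by simp [root, cp])
    · exact absurd huv (by simp [root, cp])
    · have : u = v ∧ τ = τ := by simpa [cp] using huv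
      exact this.1
  · intro u v huv
    have hne := H.ne_of_adj huv
    by_cases hu : u ∈ Tb <;> by_cases hv : v ∈ Tb <;>
      simp only [hu, hv, ite_true, ite_false, if_pos, if_neg, not_false_iff]
    · refine adj_of_spec ?_ ?_
      · simp only [root, ne_eq, Sum.inl.injEq]
        exact fun hh => hch u v huv (τ.injective hh)
      · exact ⟨u, hu⟩
    · refine (hst_adj H ch Tb).mpr ⟨?_, Or.inr ?_⟩
      · simp [root, cp]
      · exact ⟨hv, u, hu, huv.symm, rfl⟩
    · refine adj_of_spec ?_ ?_
      · simp [root, cp]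
      · exact ⟨hu, v, hv, huv, rfl⟩
    · refine adj_of_spec ?_ ?_
      · simp only [cp, ne_eq, Sum.inr.injEq, Sum.inl.injEq, Prod.mk.injEq]
        intro hh
        exact hne hh.1
      · exact ⟨rfl, huv, hu, hv⟩
  · intro v
    by_cases hv : v ∈ Tb <;> simp only [hv, ite_true, ite_false, if_pos, if_neg, not_false_iff]
    · rw [root_color hc]
      exact hστ (ch v)
    · rw [cp_color hc]
      exact hστ (ch v)

end Embed


section Assemble

variable {H : SimpleGraph V} {ch : V → Fin 3} {Tb : Finset V}

set_option synthInstance.maxSize 4000 in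
lemma root_clique [DecidableEq V] (hTbne : Tb.Nonempty) :
    (Hst H ch Tb).IsNClique 3 ({root 0, root 1, root 2} : Finset (Wt V)) := by
  have hadj : ∀ a b : Fin 3, a ≠ b → (Hst H ch Tb).Adj (root a) (root b) := by
    intro a b hab
    refine adj_of_spec ?_ hTbne
    simp only [root, ne_eq, Sum.inl.injEq]
    exact hab
  exact is3Clique_triple_iff.mpr
    ⟨hadj 0 1 (by decide), hadj 0 2 (by decide), hadj 1 2 (by decide)⟩

set_option synthInstance.maxSize 4000 in
lemma star_cliques [DecidableEq V] (hch : ∀ u v, H.Adj u v → ch u ≠ ch v)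
    (hH3 : ∀ T, H.IsNClique 3 T → T = Tb)
    (hTb2 : Tb.Nonempty → H.IsNClique 3 Tb)
    {T : Finset (Wt V)} (hT : (Hst H ch Tb).IsNClique 3 T) :
    Tb.Nonempty ∧ T = ({root 0, root 1, root 2} : Finset (Wt V)) := by
  obtain ⟨a, b, c0, hab, hac, hbc, rfl⟩ := Finset.card_eq_three.mp hT.2
  have hclique := hT.1
  have h_ab : (Hst H ch Tb).Adj a b :=
    hclique (by simp) (by simp) hab
  have h_bc : (Hst H ch Tb).Adj b c0 :=
    hclique (by simp) (by simp) hbc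
  have h_ac : (Hst H ch Tb).Adj a c0 :=
    hclique (by simp) (by simp) hac
  obtain ⟨hne, i, j, k, rfl, rfl, rfl⟩ := tri_classify hch hH3 hTb2 h_ab h_bc h_ac
  refine ⟨hne, ?_⟩
  have hij : i ≠ j := fun h => hab (by rw [h])
  have hik : i ≠ k := fun h => hac (by rw [h])
  have hjk : j ≠ k := fun h => hbc (by rw [h])
  ext w
  simp only [Finset.mem_insert, Finset.mem_singleton]
  constructor
  · rintro (rfl | rfl | rfl)
    · rcases fin3_cases i with rfl | rfl | rfl <;> simp [root]
    · rcases fin3_cases j with rfl | rfl | rfl <;> simp [root]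
    · rcases fin3_cases k with rfl | rfl | rfl <;> simp [root]
  · rintro (rfl | rfl | rfl)
    · rcases fin3_univ3 i j k 0 hij hik hjk with h | h | h <;> rw [h] <;> simp [root]
    · rcases fin3_univ3 i j k 1 hij hik hjk with h | h | h <;> rw [h] <;> simp [root]
    · rcases fin3_univ3 i j k 2 hij hik hjk with h | h | h <;> rw [h] <;> simp [root]

end Assemble

end Main

end ColoredAux

open ColoredAux in
/-- **Colored `H`-free to `H*`-free.** For every finite simple graph `H` with a proper
3-coloring `cH` and at most one triangle, there is a finite simple graph `Hstar` that
admits a proper 3-coloring, has exactly as many triangles as `H`, and such that every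
finite 3-colored graph `G` containing no colored copy of `H` contains no copy of
`Hstar` at all. -/
theorem colored_free_to_subgraph_free {V : Type} [Fintype V] (H : SimpleGraph V)
    (cH : H.Coloring (Fin 3))
    (hH : ∀ T₁ T₂ : Finset V, H.IsNClique 3 T₁ → H.IsNClique 3 T₂ → T₁ = T₂) :
    ∃ (W : Type) (_ : Fintype W) (Hstar : SimpleGraph W),
      Hstar.Colorable 3 ∧
      {T : Finset W | Hstar.IsNClique 3 T}.ncard
        = {T : Finset V | H.IsNClique 3 T}.ncard ∧
      ∀ (U : Type) [Fintype U] (G : SimpleGraph U) (cG : G.Coloring (Fin 3)),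
        (¬ ∃ φ : H →g G, Function.Injective φ ∧ ∀ v, cG (φ v) = cH v) →
        ¬ ∃ ψ : Hstar →g G, Function.Injective ψ := by
  classical
  set chf : V → Fin 3 := fun v => cH v with hchf
  have hch : ∀ u v, H.Adj u v → chf u ≠ chf v := fun u v h => cH.valid h
  by_cases hT : ∃ T : Finset V, H.IsNClique 3 T
  · obtain ⟨Tb, hTb0⟩ := hT
    have hH3 : ∀ T, H.IsNClique 3 T → T = Tb := fun T h => hH T Tb h hTb0
    have hTb2 : Tb.Nonempty → H.IsNClique 3 Tb := fun _ => hTb0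
    have hTbne : Tb.Nonempty := by
      refine Finset.card_pos.mp ?_
      rw [hTb0.2]
      norm_num
    refine ⟨Wt V, inferInstance, Hst H chf Tb, ?_, ?_, ?_⟩
    · exact ⟨SimpleGraph.Coloring.mk (cstar chf) (fun {a b} hab => cstar_proper hch a b hab)⟩
    · have h1 : {T : Finset (Wt V) | (Hst H chf Tb).IsNClique 3 T}
          = {({root 0, root 1, root 2} : Finset (Wt V))} := by
        ext T
        simp only [Set.mem_setOf_eq, Set.mem_singleton_iff]
        constructor
        · intro hcl
          exact (star_cliques hch hH3 hTb2 hcl).2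
        · rintro rfl
          exact root_clique hTbne
      have h2 : {T : Finset V | H.IsNClique 3 T} = {Tb} := by
        ext T
        simp only [Set.mem_setOf_eq, Set.mem_singleton_iff]
        exact ⟨fun h => hH3 T h, fun h => h ▸ hTb0⟩
      rw [h1, h2, Set.ncard_singleton, Set.ncard_singleton]
    · rintro U _ G cG hno ⟨ψ, hψinj⟩
      have hc : ∀ a b : Wt V, (Hst H chf Tb).Adj a b → cG (ψ a) ≠ cG (ψ b) :=
        fun a b hab => cG.valid (ψ.map_adj hab)
      obtain ⟨φ0, hφinj, hφhom, hφcol⟩ := exists_colored_copy hch hTb2 hc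
      exact hno ⟨⟨fun v => ψ (φ0 v), fun {u v} h => ψ.map_adj (hφhom u v h)⟩,
        hψinj.comp hφinj, fun v => hφcol v⟩
  · have hH3 : ∀ T, H.IsNClique 3 T → T = (∅ : Finset V) := fun T h => absurd ⟨T, h⟩ hT
    have hTb2 : (∅ : Finset V).Nonempty → H.IsNClique 3 ∅ :=
      fun h => absurd h Finset.not_nonempty_empty
    refine ⟨Wt V, inferInstance, Hst H chf ∅, ?_, ?_, ?_⟩
    · exact ⟨SimpleGraph.Coloring.mk (cstar chf) (fun {a b} hab => cstar_proper hch a b hab)⟩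
    · have h1 : {T : Finset (Wt V) | (Hst H chf ∅).IsNClique 3 T} = ∅ := by
        ext T
        simp only [Set.mem_setOf_eq, Set.mem_empty_iff_false, iff_false]
        intro hcl
        exact Finset.not_nonempty_empty (star_cliques hch hH3 hTb2 hcl).1
      have h2 : {T : Finset V | H.IsNClique 3 T} = ∅ := by
        ext T
        simp only [Set.mem_setOf_eq, Set.mem_empty_iff_false, iff_false]
        exact fun h => hT ⟨T, h⟩
      rw [h1, h2, Set.ncard_empty, Set.ncard_empty]
    · rintro U _ G cG hno ⟨ψ, hψinj⟩
      have hc : ∀ a b : Wt V, (Hst H chf ∅).Adj a b → cG (ψ a) ≠ cG (ψ b) :=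
        fun a b hab => cG.valid (ψ.map_adj hab)
      obtain ⟨φ0, hφinj, hφhom, hφcol⟩ := exists_colored_copy hch hTb2 hc
      exact hno ⟨⟨fun v => ψ (φ0 v), fun {u v} h => ψ.map_adj (hφhom u v h)⟩,
        hψinj.comp hφinj, fun v => hφcol v⟩
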